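/- Let (σ, B) and (σ', B') be two such data on L: σ, σ' ∈ L⊗ℂ with (σ,σ) = (σ',σ') = 0, (σ,σ̄) > 0, (σ',σ̄') > 0, and B, B' ∈ L⊗ℚ. If there exists an isometry g of the Mukai lattice Λ̃ whose ℂ-linear extension maps the line ℂ·exp(B)σ onto the line ℂ·exp(B')σ', then there exists a Hodge isometry T(X,α_B) ≅ T(X',α_{B'}), i.e. an isomorphism of ℤ-modules preserving the bilinear forms whose ℂ-linear extension maps the line ℂσ onto the line ℂσ'. -/

import Mathlib

/-!
Statement 19: Let (σ,B) and (σ',B') be two twisted K3 periods on L. If there exists an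
isometry g of the Mukai lattice Λ̃ whose ℂ-linear extension maps the line ℂ·exp(B)σ onto
the line ℂ·exp(B')σ', then there exists a Hodge isometry T(X,α_B) ≅ T(X',α_{B'}): an
isomorphism of ℤ-modules preserving the bilinear forms whose ℂ-linear extension maps the
line ℂσ onto the line ℂσ'.
-/

open scoped TensorProduct ComplexOrder

set_option synthInstance.maxHeartbeats 1000000
set_option maxHeartbeats 1000000

noncomputable section

variable (L : Type) [AddCommGroup L]

/-- `L ⊗ ℚ`. -/
abbrev LQ := ℚ ⊗[ℤ] L
/-- `L ⊗ ℂ`. -/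
abbrev LC := ℂ ⊗[ℤ] L

/-- The canonical map `L → L⊗ℚ`. -/
def iLQ : L →ₗ[ℤ] LQ L := TensorProduct.mk ℤ ℚ L 1
/-- The canonical map `L → L⊗ℂ`. -/
def iLC : L →ₗ[ℤ] LC L := TensorProduct.mk ℤ ℂ L 1
/-- The canonical map `L⊗ℚ → L⊗ℂ`. -/
def qToC : LQ L →ₗ[ℤ] LC L :=
  LinearMap.rTensor L ((Algebra.linearMap ℚ ℂ).restrictScalars ℤ)
/-- Complex conjugation on `L⊗ℂ`, fixing the real points. -/
def conjL : LC L →ₗ[ℤ] LC L :=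
  LinearMap.rTensor L ((starRingEnd ℂ).toAddMonoidHom.toIntLinearMap)

/-- The ℚ-bilinear extension of the form on `L` to `L⊗ℚ`. -/
def bQ (l : L →ₗ[ℤ] L →ₗ[ℤ] ℤ) : LinearMap.BilinForm ℚ (LQ L) :=
  LinearMap.BilinForm.baseChange ℚ l
/-- The ℂ-bilinear extension of the form on `L` to `L⊗ℂ`. -/
def bC (l : L →ₗ[ℤ] L →ₗ[ℤ] ℤ) : LinearMap.BilinForm ℂ (LC L) :=
  LinearMap.BilinForm.baseChange ℂ l

/-- The Mukai lattice `Λ̃ = ℤ ⊕ L ⊕ ℤ`. -/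
abbrev MukaiLattice := ℤ × L × ℤ

/-- The embedding `Λ̃ → Λ̃⊗ℂ`. -/
def embC (δ : MukaiLattice L) : ℂ × LC L × ℂ := ((δ.1 : ℂ), iLC L δ.2.1, (δ.2.2 : ℂ))

/-- The integral Mukai pairing on `Λ̃`. -/
def mZ (l : L →ₗ[ℤ] L →ₗ[ℤ] ℤ) (x y : MukaiLattice L) : ℤ :=
  l x.2.1 y.2.1 - x.1 * y.2.2 - y.1 * x.2.2

/-- The period of the B-field transform, `exp(B)σ := (0, σ, (B,σ))`, for rational `B`. -/
def expB (l : L →ₗ[ℤ] L →ₗ[ℤ] ℤ) (B : LQ L) (σ : LC L) : ℂ × LC L × ℂ :=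
  ((0 : ℂ), σ, bC L l (qToC L B) σ)

/-- The twisted transcendental lattice
`T(X,α_B) = {γ ∈ L : γ ⊥ Pic(X) and (γ,B) ∈ ℤ}`, as a ℤ-submodule of `L`. -/
def TXB (l : L →ₗ[ℤ] L →ₗ[ℤ] ℤ) (σ : LC L) (B : LQ L) : Submodule ℤ L where
  carrier := {γ : L | (∀ δ : L, bC L l (iLC L δ) σ = 0 → l γ δ = 0) ∧
    ∃ n : ℤ, bQ L l (iLQ L γ) B = (n : ℚ)}
  add_mem' := by
    rintro a b ⟨ha1, na, hna⟩ ⟨hb1, nb, hnb⟩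
    refine ⟨fun δ hδ => ?_, na + nb, ?_⟩
    · simp [map_add, LinearMap.add_apply, ha1 δ hδ, hb1 δ hδ]
    · simp only [map_add, LinearMap.add_apply, hna, hnb]
      push_cast
      ring
  zero_mem' := by
    refine ⟨fun δ _ => by simp, 0, by simp⟩
  smul_mem' := by
    rintro c a ⟨ha1, n, hn⟩
    refine ⟨fun δ hδ => ?_, c * n, ?_⟩
    · simp [map_zsmul, LinearMap.smul_apply, ha1 δ hδ]
    · simp only [map_zsmul, LinearMap.smul_apply, hn, zsmul_eq_mul]
      push_cast
      ring


/-! ### Auxiliary lemmas -/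

section Aux

variable (L : Type) [AddCommGroup L]

lemma iLQ_apply (a : L) : iLQ L a = (1 : ℚ) ⊗ₜ[ℤ] a := rfl
lemma iLC_apply (a : L) : iLC L a = (1 : ℂ) ⊗ₜ[ℤ] a := rfl

lemma mem_TXB (l : L →ₗ[ℤ] L →ₗ[ℤ] ℤ) (σ : LC L) (B : LQ L) (γ : L) :
    γ ∈ TXB L l σ B ↔ (∀ δ : L, bC L l (iLC L δ) σ = 0 → l γ δ = 0) ∧
      ∃ n : ℤ, bQ L l (iLQ L γ) B = (n : ℚ) := Iff.rfl

lemma bC_iLC (l : L →ₗ[ℤ] L →ₗ[ℤ] ℤ) (a b : L) :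
    bC L l (iLC L a) (iLC L b) = ((l a b : ℤ) : ℂ) := by
  simp [bC, iLC_apply, LinearMap.BilinForm.baseChange_tmul, zsmul_eq_mul]

lemma bQ_iLQ (l : L →ₗ[ℤ] L →ₗ[ℤ] ℤ) (a b : L) :
    bQ L l (iLQ L a) (iLQ L b) = ((l a b : ℤ) : ℚ) := by
  simp [bQ, iLQ_apply, LinearMap.BilinForm.baseChange_tmul, zsmul_eq_mul]

lemma qToC_iLQ (a : L) : qToC L (iLQ L a) = iLC L a := by
  rw [qToC, iLQ_apply, iLC_apply]
  erw [LinearMap.rTensor_tmul]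
  simp

/-- The complexified Mukai pairing. -/
def mC (l : L →ₗ[ℤ] L →ₗ[ℤ] ℤ) (x y : ℂ × LC L × ℂ) : ℂ :=
  bC L l x.2.1 y.2.1 - x.1 * y.2.2 - y.1 * x.2.2

lemma mC_add_right (l : L →ₗ[ℤ] L →ₗ[ℤ] ℤ) (x y z : ℂ × LC L × ℂ) :
    mC L l x (y + z) = mC L l x y + mC L l x z := by
  simp only [mC, Prod.fst_add, Prod.snd_add, map_add, LinearMap.add_apply]
  ring

lemma mC_smul_right (l : L →ₗ[ℤ] L →ₗ[ℤ] ℤ) (c : ℂ) (x y : ℂ × LC L × ℂ) :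
    mC L l x (c • y) = c * mC L l x y := by
  simp only [mC, Prod.smul_fst, Prod.smul_snd, map_smul, LinearMap.smul_apply,
    smul_eq_mul]
  ring

lemma mC_add_left (l : L →ₗ[ℤ] L →ₗ[ℤ] ℤ) (x y z : ℂ × LC L × ℂ) :
    mC L l (x + y) z = mC L l x z + mC L l y z := by
  simp only [mC, Prod.fst_add, Prod.snd_add, map_add, LinearMap.add_apply]
  ring

lemma mC_smul_left (l : L →ₗ[ℤ] L →ₗ[ℤ] ℤ) (c : ℂ) (x y : ℂ × LC L × ℂ) :
    mC L l (c • x) y = c * mC L l x y := by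
  simp only [mC, Prod.smul_fst, Prod.smul_snd, map_smul, LinearMap.smul_apply,
    smul_eq_mul]
  ring

lemma mC_zero_right (l : L →ₗ[ℤ] L →ₗ[ℤ] ℤ) (x : ℂ × LC L × ℂ) :
    mC L l x 0 = 0 := by
  simp [mC]

lemma mC_embC (l : L →ₗ[ℤ] L →ₗ[ℤ] ℤ) (x y : MukaiLattice L) :
    mC L l (embC L x) (embC L y) = ((mZ L l x y : ℤ) : ℂ) := by
  simp only [mC, embC, mZ, bC_iLC]
  push_cast
  ring

lemma mC_embC_expB (l : L →ₗ[ℤ] L →ₗ[ℤ] ℤ) (z : MukaiLattice L) (B : LQ L) (σ : LC L) :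
    mC L l (embC L z) (expB L l B σ) =
      bC L l (iLC L z.2.1) σ - (z.1 : ℂ) * bC L l (qToC L B) σ := by
  simp [mC, embC, expB]

lemma iLC_span : Submodule.span ℂ (Set.range (iLC L)) = ⊤ := by
  rw [eq_top_iff]
  rintro t -
  induction t using TensorProduct.induction_on with
  | zero => exact Submodule.zero_mem _
  | tmul c γ =>
      have h : (c ⊗ₜ[ℤ] γ : LC L) = c • ((1 : ℂ) ⊗ₜ[ℤ] γ) := by
        rw [TensorProduct.smul_tmul', smul_eq_mul, mul_one]
      rw [h]
      exact Submodule.smul_mem _ _ (Submodule.subset_span ⟨γ, rfl⟩)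
  | add x y hx hy => exact Submodule.add_mem _ hx hy

lemma embC_span : Submodule.span ℂ (Set.range (embC L)) = ⊤ := by
  rw [eq_top_iff]
  rintro ⟨x, t, y⟩ -
  have hmid : ∀ t : LC L, ((0 : ℂ), t, (0 : ℂ)) ∈ Submodule.span ℂ (Set.range (embC L)) := by
    intro t
    have ht : t ∈ Submodule.span ℂ (Set.range (iLC L)) := by
      rw [iLC_span]; trivial
    induction ht using Submodule.span_induction with
    | mem u hu =>
        obtain ⟨γ, rfl⟩ := hu
        have : ((0 : ℂ), iLC L γ, (0 : ℂ)) = embC L (0, γ, 0) := by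
          simp [embC]
        rw [this]
        exact Submodule.subset_span ⟨_, rfl⟩
    | zero => exact Submodule.zero_mem _
    | add u v hu hv hu' hv' =>
        have : ((0 : ℂ), u + v, (0 : ℂ)) = ((0 : ℂ), u, (0 : ℂ)) + ((0 : ℂ), v, (0 : ℂ)) := by
          simp
        rw [this]
        exact Submodule.add_mem _ hu' hv'
    | smul c u hu hu' =>
        have : ((0 : ℂ), c • u, (0 : ℂ)) = c • ((0 : ℂ), u, (0 : ℂ)) := by
          simp
        rw [this]
        exact Submodule.smul_mem _ _ hu'
  have h1 : ((x, t, y) : ℂ × LC L × ℂ)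
      = x • embC L (1, 0, 0) + y • embC L (0, 0, 1) + ((0 : ℂ), t, (0 : ℂ)) := by
    simp [embC, Prod.ext_iff]
  rw [h1]
  exact Submodule.add_mem _
    (Submodule.add_mem _
      (Submodule.smul_mem _ _ (Submodule.subset_span ⟨_, rfl⟩))
      (Submodule.smul_mem _ _ (Submodule.subset_span ⟨_, rfl⟩)))
    (hmid t)

lemma gC_preserves (l : L →ₗ[ℤ] L →ₗ[ℤ] ℤ)
    (g : MukaiLattice L ≃ₗ[ℤ] MukaiLattice L)
    (hg : ∀ x y : MukaiLattice L, mZ L l (g x) (g y) = mZ L l x y)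
    (gC : (ℂ × LC L × ℂ) →ₗ[ℂ] (ℂ × LC L × ℂ))
    (hgC : ∀ δ : MukaiLattice L, gC (embC L δ) = embC L (g δ)) :
    ∀ u v, mC L l (gC u) (gC v) = mC L l u v := by
  have hbase : ∀ x : MukaiLattice L, ∀ v,
      mC L l (gC (embC L x)) (gC v) = mC L l (embC L x) v := by
    intro x v
    have hv : v ∈ Submodule.span ℂ (Set.range (embC L)) := by rw [embC_span]; trivial
    induction hv using Submodule.span_induction with
    | mem u hu =>
        obtain ⟨y, rfl⟩ := hu
        rw [hgC, hgC, mC_embC, mC_embC, hg]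
    | zero => rw [map_zero, mC_zero_right, mC_zero_right]
    | add a b ha hb ha' hb' => rw [map_add, mC_add_right, mC_add_right, ha', hb']
    | smul c a ha ha' => rw [map_smul, mC_smul_right, mC_smul_right, ha']
  intro u v
  have hu : u ∈ Submodule.span ℂ (Set.range (embC L)) := by rw [embC_span]; trivial
  induction hu using Submodule.span_induction with
  | mem a ha =>
      obtain ⟨x, rfl⟩ := ha
      exact hbase x v
  | zero => simp [mC, map_zero]
  | add a b ha hb ha' hb' =>
      rw [map_add, mC_add_left, mC_add_left, ha', hb']
  | smul c a ha ha' =>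
      rw [map_smul, mC_smul_left, mC_smul_left, ha']

lemma exists_int_smul (B : LQ L) : ∃ (N : ℤ) (b0 : L), N ≠ 0 ∧ N • B = iLQ L b0 := by
  induction B using TensorProduct.induction_on with
  | zero => exact ⟨1, 0, one_ne_zero, by simp⟩
  | tmul q γ =>
      refine ⟨(q.den : ℤ), q.num • γ, by exact_mod_cast q.den_nz, ?_⟩
      rw [iLQ_apply]
      rw [TensorProduct.smul_tmul']
      rw [← TensorProduct.smul_tmul]
      congr 1
      rw [zsmul_eq_mul, zsmul_eq_mul, mul_one]
      push_cast
      rw [mul_comm]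
      exact Rat.mul_den_eq_num q
  | add x y hx hy =>
      obtain ⟨N1, b1, h1, e1⟩ := hx
      obtain ⟨N2, b2, h2, e2⟩ := hy
      refine ⟨N1 * N2, N2 • b1 + N1 • b2, mul_ne_zero h1 h2, ?_⟩
      rw [smul_add, map_add, map_zsmul, map_zsmul, ← e1, ← e2]
      rw [mul_comm N1 N2, mul_smul, mul_comm N2 N1, mul_smul]

lemma bC_iLC_smul_rep (l : L →ₗ[ℤ] L →ₗ[ℤ] ℤ) (B : LQ L) (N : ℤ) (b0 : L)
    (hNB : N • B = iLQ L b0) (σ : LC L) :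
    bC L l (iLC L b0) σ = N • bC L l (qToC L B) σ := by
  have h : iLC L b0 = N • qToC L B := by
    rw [← map_zsmul, hNB, qToC_iLQ]
  rw [h, map_zsmul, LinearMap.smul_apply]

/-- The key transport lemma. -/
lemma key_transport (l : L →ₗ[ℤ] L →ₗ[ℤ] ℤ)
    (σ σ' : LC L) (B B' : LQ L)
    (g : MukaiLattice L ≃ₗ[ℤ] MukaiLattice L)
    (hg : ∀ x y : MukaiLattice L, mZ L l (g x) (g y) = mZ L l x y)
    (gC : (ℂ × LC L × ℂ) →ₗ[ℂ] (ℂ × LC L × ℂ))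
    (hgC : ∀ δ : MukaiLattice L, gC (embC L δ) = embC L (g δ))
    (hiso : ∀ u v, mC L l (gC u) (gC v) = mC L l u v)
    (μ : ℂ) (hline : gC (expB L l B σ) = μ • expB L l B' σ')
    (γ : L) (hγ : γ ∈ TXB L l σ B) (n : ℤ) (hn : bQ L l (iLQ L γ) B = (n : ℚ)) :
    (g (0, γ, n)).1 = 0 ∧ (g (0, γ, n)).2.1 ∈ TXB L l σ' B' ∧
      bQ L l (iLQ L (g (0, γ, n)).2.1) B' = (((g (0, γ, n)).2.2 : ℤ) : ℚ) := by
  obtain ⟨hγ1, -⟩ := (mem_TXB L l σ B γ).mp hγ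
  obtain ⟨N, b0, hN, hNB⟩ := exists_int_smul L B
  -- γ's pairing with b0
  have hγb0 : l γ b0 = N * n := by
    have h1 : bQ L l (iLQ L γ) (N • B) = ((N * n : ℤ) : ℚ) := by
      rw [map_zsmul, hn, zsmul_eq_mul]
      push_cast; ring
    rw [hNB, bQ_iLQ] at h1
    exact_mod_cast h1
  -- Step A: (0,γ,n) is orthogonal to everything orthogonal to exp(B)σ
  have stepA : ∀ z : MukaiLattice L,
      mC L l (embC L z) (expB L l B σ) = 0 → mZ L l (0, γ, n) z = 0 := by
    rintro ⟨a, δ, b⟩ hz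
    rw [mC_embC_expB] at hz
    have e1 : bC L l (iLC L δ) σ = (a : ℂ) * bC L l (qToC L B) σ := by
      rw [sub_eq_zero] at hz; exact hz
    have h2 : bC L l (iLC L (N • δ - a • b0)) σ = 0 := by
      rw [map_sub, map_zsmul, map_zsmul, map_sub, map_zsmul, map_zsmul,
        LinearMap.sub_apply, LinearMap.smul_apply, LinearMap.smul_apply]
      rw [bC_iLC_smul_rep L l B N b0 hNB σ, e1]
      simp only [zsmul_eq_mul]
      ring
    have h3 := hγ1 _ h2
    rw [map_sub, map_zsmul, map_zsmul] at h3
    simp only [LinearMap.sub_apply, LinearMap.smul_apply, zsmul_eq_mul,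
      smul_eq_mul] at h3
    -- h3 : N * l γ δ - a * l γ b0 = 0
    have h4 : l γ δ = a * n := by
      have h5 : N * l γ δ = N * (a * n) := by
        rw [hγb0] at h3
        linarith [h3]
      exact mul_left_cancel₀ hN h5
    simp only [mZ]
    rw [h4]
    ring
  -- Step B: g (0,γ,n) is orthogonal to everything orthogonal to exp(B')σ'
  have stepB : ∀ w : MukaiLattice L,
      mC L l (embC L w) (expB L l B' σ') = 0 → mZ L l (g (0, γ, n)) w = 0 := by
    intro w hw
    have h1 : mC L l (embC L (g.symm w)) (expB L l B σ) = 0 := by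
      rw [← hiso, hgC, hline, g.apply_symm_apply, mC_smul_right, hw, mul_zero]
    have h2 := stepA (g.symm w) h1
    have h3 := hg (0, γ, n) (g.symm w)
    rw [g.apply_symm_apply] at h3
    rw [h3, h2]
  -- first coordinate vanishes
  have hfst : (g (0, γ, n)).1 = 0 := by
    have h001 : mC L l (embC L (0, 0, 1)) (expB L l B' σ') = 0 := by
      rw [mC_embC_expB]
      simp
    have h1 := stepB (0, 0, 1) h001
    simp only [mZ, map_zero, LinearMap.zero_apply] at h1
    omega
  obtain ⟨N', b0', hN', hNB'⟩ := exists_int_smul L B'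
  have hw' : mC L l (embC L (N', b0', (0 : ℤ))) (expB L l B' σ') = 0 := by
    rw [mC_embC_expB]
    show bC L l (iLC L b0') σ' - (N' : ℂ) * bC L l (qToC L B') σ' = 0
    rw [bC_iLC_smul_rep L l B' N' b0' hNB' σ', zsmul_eq_mul]
    ring
  have h1 := stepB _ hw'
  simp only [mZ, hfst] at h1
  have hpair : l (g (0, γ, n)).2.1 b0' = N' * (g (0, γ, n)).2.2 := by omega
  have hN'Q : (N' : ℚ) ≠ 0 := Int.cast_ne_zero.mpr hN'
  have hthird : bQ L l (iLQ L (g (0, γ, n)).2.1) B' = (((g (0, γ, n)).2.2 : ℤ) : ℚ) := by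
    have h3 : bQ L l (iLQ L (g (0, γ, n)).2.1) (N' • B') = ((l (g (0, γ, n)).2.1 b0' : ℤ) : ℚ) := by
      rw [hNB', bQ_iLQ]
    rw [map_zsmul, zsmul_eq_mul, hpair] at h3
    apply mul_left_cancel₀ hN'Q
    rw [h3]
    push_cast
    ring
  refine ⟨hfst, ?_, hthird⟩
  rw [mem_TXB]
  refine ⟨?_, ⟨_, hthird⟩⟩
  intro δ hδ
  have hw : mC L l (embC L ((0 : ℤ), δ, (0 : ℤ))) (expB L l B' σ') = 0 := by
    rw [mC_embC_expB]
    simp [hδ]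
  have h2 := stepB _ hw
  simp only [mZ, hfst] at h2
  omega

end Aux

/-- If an isometry `g` of the Mukai lattice has ℂ-linear extension
mapping the line `ℂ·exp(B)σ` onto `ℂ·exp(B')σ'`, then there is a Hodge isometry
`T(X,α_B) ≅ T(X',α_{B'})`: a ℤ-module isomorphism preserving the bilinear forms whose
ℂ-linear extension maps the line `ℂσ` onto the line `ℂσ'`. -/
theorem mukai_isometry_gives_twisted_hodge_isometry
    (L : Type) [AddCommGroup L] [Module.Free ℤ L] [Module.Finite ℤ L]
    (l : L →ₗ[ℤ] L →ₗ[ℤ] ℤ) (hsymm : ∀ x y : L, l x y = l y x)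
    (σ σ' : LC L)
    (hσ0 : bC L l σ σ = 0) (hσpos : 0 < bC L l σ (conjL L σ))
    (hσ'0 : bC L l σ' σ' = 0) (hσ'pos : 0 < bC L l σ' (conjL L σ'))
    (B B' : LQ L)
    (g : MukaiLattice L ≃ₗ[ℤ] MukaiLattice L)
    (hg : ∀ x y : MukaiLattice L, mZ L l (g x) (g y) = mZ L l x y)
    (gC : (ℂ × LC L × ℂ) →ₗ[ℂ] (ℂ × LC L × ℂ))
    (hgC : ∀ δ : MukaiLattice L, gC (embC L δ) = embC L (g δ))
    (hline : ∃ μ : ℂ, μ ≠ 0 ∧ gC (expB L l B σ) = μ • expB L l B' σ') :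
    ∃ e : TXB L l σ B ≃ₗ[ℤ] TXB L l σ' B',
      (∀ γ γ' : TXB L l σ B, l ((e γ : L)) ((e γ' : L)) = l (γ : L) (γ' : L)) ∧
      ∃ E : LC L →ₗ[ℂ] LC L,
        (∀ γ : TXB L l σ B, E (iLC L (γ : L)) = iLC L ((e γ : L))) ∧
        ∃ μ : ℂ, μ ≠ 0 ∧ E σ = μ • σ' := by
  classical
  obtain ⟨μ, hμ, hline⟩ := hline
  have hiso := gC_preserves L l g hg gC hgC
  have hfinLC : Module.Finite ℂ (LC L) := Module.Finite.base_change ℤ ℂ L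
  have hfin : FiniteDimensional ℂ (ℂ × LC L × ℂ) := by infer_instance
  have hsurj : Function.Surjective gC := by
    rw [← LinearMap.range_eq_top, ← top_le_iff, ← embC_span L, Submodule.span_le]
    rintro _ ⟨δ, rfl⟩
    exact ⟨embC L (g.symm δ), by rw [hgC, g.apply_symm_apply]⟩
  have hinj : Function.Injective gC := LinearMap.injective_iff_surjective.mpr hsurj
  let gE : (ℂ × LC L × ℂ) ≃ₗ[ℂ] (ℂ × LC L × ℂ) := LinearEquiv.ofBijective gC ⟨hinj, hsurj⟩
  have hgE : ∀ u, gE u = gC u := fun u => rfl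
  have hgCinv : ∀ δ : MukaiLattice L, gE.symm.toLinearMap (embC L δ) = embC L (g.symm δ) := by
    intro δ
    apply gE.injective
    show gE (gE.symm (embC L δ)) = gE (embC L (g.symm δ))
    rw [gE.apply_symm_apply, hgE, hgC, g.apply_symm_apply]
  have hline' : gE.symm.toLinearMap (expB L l B' σ') = μ⁻¹ • expB L l B σ := by
    show gE.symm (expB L l B' σ') = μ⁻¹ • expB L l B σ
    rw [LinearEquiv.symm_apply_eq, map_smul, hgE, hline, smul_smul,
      inv_mul_cancel₀ hμ, one_smul]
  have hiso' : ∀ u v, mC L l (gE.symm.toLinearMap u) (gE.symm.toLinearMap v) = mC L l u v := by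
    intro u v
    have h := hiso (gE.symm u) (gE.symm v)
    rw [show gC (gE.symm u) = gE (gE.symm u) from rfl,
      show gC (gE.symm v) = gE (gE.symm v) from rfl,
      gE.apply_symm_apply, gE.apply_symm_apply] at h
    exact h.symm
  have hg' : ∀ x y : MukaiLattice L, mZ L l (g.symm x) (g.symm y) = mZ L l x y := by
    intro x y
    have h := hg (g.symm x) (g.symm y)
    rw [g.apply_symm_apply, g.apply_symm_apply] at h
    exact h.symm
  have hex : ∀ x : TXB L l σ B, ∃ n : ℤ, bQ L l (iLQ L (x : L)) B = (n : ℚ) :=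
    fun x => ((mem_TXB L l σ B x).mp x.prop).2
  choose nf hnf using hex
  have hex' : ∀ x : TXB L l σ' B', ∃ n : ℤ, bQ L l (iLQ L (x : L)) B' = (n : ℚ) :=
    fun x => ((mem_TXB L l σ' B' x).mp x.prop).2
  choose nf' hnf' using hex'
  have nf_eq : ∀ (x : TXB L l σ B) (m : ℤ),
      bQ L l (iLQ L (x : L)) B = (m : ℚ) → nf x = m := by
    intro x m hm
    have h := (hnf x).symm.trans hm
    exact_mod_cast h
  have nf'_eq : ∀ (x : TXB L l σ' B') (m : ℤ),
      bQ L l (iLQ L (x : L)) B' = (m : ℚ) → nf' x = m := by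
    intro x m hm
    have h := (hnf' x).symm.trans hm
    exact_mod_cast h
  have keyF := fun x : TXB L l σ B =>
    key_transport L l σ σ' B B' g hg gC hgC hiso μ hline (x : L) x.prop (nf x) (hnf x)
  have keyB := fun x : TXB L l σ' B' =>
    key_transport L l σ' σ B' B g.symm hg' gE.symm.toLinearMap hgCinv hiso' μ⁻¹ hline'
      (x : L) x.prop (nf' x) (hnf' x)
  let F : TXB L l σ B → MukaiLattice L := fun x => g (0, (x : L), nf x)
  let F' : TXB L l σ' B' → MukaiLattice L := fun x => g.symm (0, (x : L), nf' x)
  let ef : TXB L l σ B → TXB L l σ' B' := fun x => ⟨(F x).2.1, (keyF x).2.1⟩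
  let ef' : TXB L l σ' B' → TXB L l σ B := fun x => ⟨(F' x).2.1, (keyB x).2.1⟩
  have hFadd : ∀ x y : TXB L l σ B, F (x + y) = F x + F y := by
    intro x y
    have hadd : nf (x + y) = nf x + nf y := by
      apply nf_eq
      rw [show ((x + y : TXB L l σ B) : L) = (x : L) + (y : L) from rfl,
        map_add, map_add, LinearMap.add_apply, hnf x, hnf y]
      push_cast
      ring
    show g (0, ((x + y : TXB L l σ B) : L), nf (x + y)) = g _ + g _
    rw [← map_add]
    congr 1
    rw [hadd, show ((x + y : TXB L l σ B) : L) = (x : L) + (y : L) from rfl]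
    simp [Prod.mk_add_mk]
  have hF'add : ∀ x y : TXB L l σ' B', F' (x + y) = F' x + F' y := by
    intro x y
    have hadd : nf' (x + y) = nf' x + nf' y := by
      apply nf'_eq
      rw [show ((x + y : TXB L l σ' B') : L) = (x : L) + (y : L) from rfl,
        map_add, map_add, LinearMap.add_apply, hnf' x, hnf' y]
      push_cast
      ring
    show g.symm (0, ((x + y : TXB L l σ' B') : L), nf' (x + y)) = g.symm _ + g.symm _
    rw [← map_add]
    congr 1
    rw [hadd, show ((x + y : TXB L l σ' B') : L) = (x : L) + (y : L) from rfl]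
    simp [Prod.mk_add_mk]
  let eAdd : TXB L l σ B →+ TXB L l σ' B' := AddMonoidHom.mk' ef (by
    intro x y
    apply Subtype.ext
    show (F (x + y)).2.1 = ((ef x + ef y : TXB L l σ' B') : L)
    rw [hFadd]
    rfl)
  let e'Add : TXB L l σ' B' →+ TXB L l σ B := AddMonoidHom.mk' ef' (by
    intro x y
    apply Subtype.ext
    show (F' (x + y)).2.1 = ((ef' x + ef' y : TXB L l σ B) : L)
    rw [hF'add]
    rfl)
  let eL : TXB L l σ B →ₗ[ℤ] TXB L l σ' B' := eAdd.toIntLinearMap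
  let eL' : TXB L l σ' B' →ₗ[ℤ] TXB L l σ B := e'Add.toIntLinearMap
  have hlr : ∀ x : TXB L l σ B, ef' (ef x) = x := by
    intro x
    apply Subtype.ext
    have h1 : nf' (ef x) = (F x).2.2 := nf'_eq _ _ ((keyF x).2.2)
    show (g.symm (0, (F x).2.1, nf' (ef x))).2.1 = (x : L)
    rw [h1]
    have h2 : ((0 : ℤ), (F x).2.1, (F x).2.2) = F x := Prod.ext (keyF x).1.symm rfl
    rw [h2]
    show (g.symm (g (0, (x : L), nf x))).2.1 = (x : L)
    rw [g.symm_apply_apply]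
  have hrl : ∀ y : TXB L l σ' B', ef (ef' y) = y := by
    intro y
    apply Subtype.ext
    have h1 : nf (ef' y) = (F' y).2.2 := nf_eq _ _ ((keyB y).2.2)
    show (g (0, (F' y).2.1, nf (ef' y))).2.1 = (y : L)
    rw [h1]
    have h2 : ((0 : ℤ), (F' y).2.1, (F' y).2.2) = F' y := Prod.ext (keyB y).1.symm rfl
    rw [h2]
    show (g (g.symm (0, (y : L), nf' y))).2.1 = (y : L)
    rw [g.apply_symm_apply]
  refine ⟨LinearEquiv.ofLinear eL eL' (LinearMap.ext hrl) (LinearMap.ext hlr), ?_, ?_⟩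
  · intro x y
    have h := hg (0, (x : L), nf x) (0, (y : L), nf y)
    simp only [mZ, (keyF x).1, (keyF y).1, zero_mul, mul_zero, sub_zero] at h
    exact h
  · refine ⟨((LinearMap.fst ℂ (LC L) ℂ).comp (LinearMap.snd ℂ ℂ (LC L × ℂ))).comp
      (gC.comp (LinearMap.prod 0 (LinearMap.prod LinearMap.id (bC L l (qToC L B))))),
      ?_, μ, hμ, ?_⟩
    · intro x
      have h1 : bC L l (qToC L B) (iLC L (x : L)) = ((nf x : ℤ) : ℂ) := by
        obtain ⟨N, b0, hN, hNB⟩ := exists_int_smul L B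
        have hNC : (N : ℂ) ≠ 0 := Int.cast_ne_zero.mpr hN
        have h2 : iLC L b0 = N • qToC L B := by rw [← map_zsmul, hNB, qToC_iLQ]
        have h4 : l (x : L) b0 = N * nf x := by
          have h5 : bQ L l (iLQ L (x : L)) (N • B) = ((N * nf x : ℤ) : ℚ) := by
            rw [map_zsmul, hnf x, zsmul_eq_mul]
            push_cast
            ring
          rw [hNB, bQ_iLQ] at h5
          exact_mod_cast h5
        apply mul_left_cancel₀ hNC
        calc (N : ℂ) * bC L l (qToC L B) (iLC L (x : L))
            = bC L l (N • qToC L B) (iLC L (x : L)) := by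
              rw [map_zsmul, LinearMap.smul_apply, zsmul_eq_mul]
          _ = ((l b0 (x : L) : ℤ) : ℂ) := by rw [← h2, bC_iLC]
          _ = ((l (x : L) b0 : ℤ) : ℂ) := by rw [hsymm]
          _ = (N : ℂ) * ((nf x : ℤ) : ℂ) := by
              rw [h4]
              push_cast
              ring
      show (gC ((0 : ℂ), iLC L (x : L), bC L l (qToC L B) (iLC L (x : L)))).2.1
          = iLC L _
      have h6 : ((0 : ℂ), iLC L (x : L), bC L l (qToC L B) (iLC L (x : L)))
          = embC L (0, (x : L), nf x) := by
        simp [embC, h1]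
      rw [h6, hgC]
      rfl
    · show (gC ((0 : ℂ), σ, bC L l (qToC L B) σ)).2.1 = μ • σ'
      have h7 : ((0 : ℂ), σ, bC L l (qToC L B) σ) = expB L l B σ := rfl
      rw [h7, hline]
      rfl

end
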